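/- Let X be a real Banach space and D ⊆ X a bounded, closed, convex set containing at least two points. Then inf{H(D₁,D) : D₁ is a completion of D} ≥ H(D, D^c), where H denotes the Hausdorff distance. -/

import Mathlib

open Metric Set Bornology

variable {X : Type*}

/-- `frad A x` is r(A,x) = sup of distances from x to points of A. -/
noncomputable def frad [NormedAddCommGroup X] (A : Set X) (x : X) : ℝ :=
  sSup ((fun a => dist x a) '' A)

/-- `rad A` is the (Chebyshev) radius r(A) = inf over x in the space of r(A,x). -/
noncomputable def rad [NormedAddCommGroup X] (A : Set X) : ℝ :=
  sInf (Set.range fun x => frad A x)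

/-- `selfRad A` is the self-radius r(A,A) = inf over x ∈ A of r(A,x). -/
noncomputable def selfRad [NormedAddCommGroup X] (A : Set X) : ℝ :=
  sInf ((fun x => frad A x) '' A)

/-- The ball intersection D' of D. -/
noncomputable def ballInt [NormedAddCommGroup X] (D : Set X) : Set X :=
  ⋂ x ∈ D, closedBall x (Metric.diam D)

/-- The ball hull D^c of D. -/
noncomputable def ballHull [NormedAddCommGroup X] (D : Set X) : Set X :=
  ⋂ x ∈ {y : X | D ⊆ closedBall y (Metric.diam D)}, closedBall x (Metric.diam D)

/-- A set is diametrically maximal (complete) if adjoining any outside point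
increases the diameter. -/
def IsDM [NormedAddCommGroup X] (C : Set X) : Prop :=
  ∀ x ∉ C, Metric.diam C < Metric.diam (insert x C)

/-- `C` is a completion of `D`: a diametrically maximal set containing `D`
with the same diameter. -/
def IsCompletion [NormedAddCommGroup X] (D C : Set X) : Prop :=
  IsDM C ∧ D ⊆ C ∧ Metric.diam C = Metric.diam D

theorem exists_completion [NormedAddCommGroup X] (D : Set X) (hDb : IsBounded D)
    (hDnt : D.Nontrivial) :
    ∃ C : Set X, IsCompletion D C := by
  have hDe : EMetric.diam D ≠ ⊤ := hDb.ediam_ne_top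
  set S : Set (Set X) := {C | D ⊆ C ∧ EMetric.diam C ≤ EMetric.diam D} with hS
  have hDS : D ∈ S := ⟨subset_rfl, le_rfl⟩
  have hch : ∀ c ⊆ S, IsChain (· ⊆ ·) c → c.Nonempty →
      ∃ ub ∈ S, ∀ s ∈ c, s ⊆ ub := by
    intro c hcS hchain hcne
    refine ⟨⋃₀ c, ⟨?_, ?_⟩, fun s hs => subset_sUnion_of_mem hs⟩
    · obtain ⟨s, hs⟩ := hcne
      exact (hcS hs).1.trans (subset_sUnion_of_mem hs)
    · apply EMetric.diam_le
      rintro x hx y hy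
      obtain ⟨s, hs, hxs⟩ := hx
      obtain ⟨t, ht, hyt⟩ := hy
      rcases hchain.total hs ht with h | h
      · exact le_trans (EMetric.edist_le_diam_of_mem (h hxs) hyt) (hcS ht).2
      · exact le_trans (EMetric.edist_le_diam_of_mem hxs (h hyt)) (hcS hs).2
  obtain ⟨m, hDm, hmax⟩ := zorn_subset_nonempty S hch D hDS
  have hmS := hmax.1
  have hme : EMetric.diam m ≤ EMetric.diam D := hmS.2
  have hmD : EMetric.diam m = EMetric.diam D :=
    le_antisymm hme (EMetric.diam_mono hDm)
  have hmnt : EMetric.diam m ≠ ⊤ := hmD ▸ hDe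
  have hmb : IsBounded m := by
    rw [Metric.isBounded_iff_ediam_ne_top]; exact hmnt
  refine ⟨m, ?_, hDm, ?_⟩
  · intro x hx
    have hnot : insert x m ∉ S := by
      intro hmem
      exact hx (hmax.2 hmem (subset_insert x m) (mem_insert x m))
    have hgt : EMetric.diam D < EMetric.diam (insert x m) := by
      by_contra h
      exact hnot ⟨hDm.trans (subset_insert x m), not_lt.mp h⟩
    have hins : EMetric.diam (insert x m) ≠ ⊤ :=
      (hmb.insert x).ediam_ne_top
    have h2 : EMetric.diam m < EMetric.diam (insert x m) := hmD ▸ hgt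
    exact (ENNReal.toReal_lt_toReal hmnt hins).mpr h2
  · exact congrArg ENNReal.toReal hmD

theorem completion_bound [NormedAddCommGroup X] (D C : Set X) (hDb : IsBounded D)
    (hDnt : D.Nontrivial) (hC : IsCompletion D C) :
    Metric.hausdorffDist D (ballHull D) ≤ Metric.hausdorffDist C D := by
  obtain ⟨hDM, hDC, hdiam⟩ := hC
  obtain ⟨a, ha, b, hb, hab⟩ := hDnt
  have hdpos : 0 < Metric.diam D :=
    lt_of_lt_of_le (dist_pos.mpr hab) (Metric.dist_le_diam_of_mem hDb ha hb)
  have hCb : IsBounded C := by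
    by_contra h
    rw [Metric.isBounded_iff_ediam_ne_top, not_not] at h
    have : Metric.diam C = 0 := by simp [Metric.diam, h]
    rw [this] at hdiam; exact hdpos.ne hdiam
  -- every point of C is a center for D
  have hcenter : ∀ w ∈ C, D ⊆ closedBall w (Metric.diam D) := by
    intro w hw z hz
    rw [mem_closedBall, dist_comm]
    calc dist w z ≤ Metric.diam C := Metric.dist_le_diam_of_mem hCb hw (hDC hz)
    _ = Metric.diam D := hdiam
  -- ballHull D ⊆ C
  have hsub : ballHull D ⊆ C := by
    intro z hz
    by_contra hzC
    have hlt := hDM z hzC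
    have hle : Metric.diam (insert z C) ≤ Metric.diam C := by
      rw [hdiam]
      apply Metric.diam_le_of_forall_dist_le hdpos.le
      intro x hx y hy
      rcases hx with rfl | hx
      · rcases hy with rfl | hy
        · simp [hdpos.le]
        · have := mem_iInter₂.mp hz y (hcenter y hy)
          rwa [mem_closedBall] at this
      · rcases hy with rfl | hy
        · have := mem_iInter₂.mp hz x (hcenter x hx)
          rw [mem_closedBall] at this
          rwa [dist_comm] at this
        · exact (Metric.dist_le_diam_of_mem hCb hx hy).trans hdiam.le
    exact absurd hle (not_le.mpr hlt)
  have hDhull : D ⊆ ballHull D := by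
    intro z hz
    exact mem_iInter₂.mpr fun y hy => hy hz
  have hne : EMetric.hausdorffEdist C D ≠ ⊤ :=
    Metric.hausdorffEdist_ne_top_of_nonempty_of_bounded ⟨a, hDC ha⟩ ⟨a, ha⟩ hCb hDb
  apply Metric.hausdorffDist_le_of_infDist Metric.hausdorffDist_nonneg
  · intro x hx
    rw [Metric.infDist_zero_of_mem (hDhull hx)]
    exact Metric.hausdorffDist_nonneg
  · intro x hx
    exact Metric.infDist_le_hausdorffDist_of_mem (hsub hx) hne

/-- inf{H(D₁,D) : D₁ a completion of D} ≥ H(D, D^c). -/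
theorem stmt7 [NormedAddCommGroup X] [NormedSpace ℝ X] [CompleteSpace X]
    (D : Set X) (hDb : IsBounded D) (hDcl : IsClosed D) (hDcv : Convex ℝ D)
    (hDnt : D.Nontrivial) :
    sInf {h : ℝ | ∃ D₁ : Set X, IsCompletion D D₁ ∧ h = Metric.hausdorffDist D₁ D} ≥
      Metric.hausdorffDist D (ballHull D) := by
  apply le_csInf
  · obtain ⟨C, hC⟩ := exists_completion D hDb hDnt
    exact ⟨Metric.hausdorffDist C D, C, hC, rfl⟩
  · rintro h ⟨D₁, hD₁, rfl⟩
    exact completion_bound D D₁ hDb hDnt hD₁
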